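/- Let ε ∈ (0, 1/12] and n > 0 be real numbers, let s be a real number with 0 ≤ s ≤ (2/3)·n, and let q be a real number with 0 ≤ q ≤ n − s. Then s·(5/6 − ε + (1 − 6ε)·q/(2n)) ≤ (2/3)·(1 − 2ε)·n. -/

import Mathlib

/-- Expectation core of the second part of the bias-control lemma
(p = 1/6 + ε, ε ≤ 1/12): a bias at most (2/3)n cannot grow above
(2/3)(1 − 2ε)n in expectation. -/
theorem bias_control_part_two
    (ε n q s : ℝ) (hε0 : 0 < ε) (hε1 : ε ≤ 1 / 12) (hn : 0 < n)
    (hs0 : 0 ≤ s) (hs1 : s ≤ (2 / 3) * n) (hq0 : 0 ≤ q) (hq1 : q ≤ n - s) :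
    s * (5 / 6 - ε + (1 - 6 * ε) * q / (2 * n)) ≤ (2 / 3) * (1 - 2 * ε) * n := by
  have h2n : (0:ℝ) < 2 * n := by linarith
  rw [← mul_le_mul_iff_of_pos_right h2n]
  have heq : s * (5 / 6 - ε + (1 - 6 * ε) * q / (2 * n)) * (2 * n)
      = s * ((5 / 6 - ε) * (2 * n) + (1 - 6 * ε) * q) := by
    field_simp
  rw [heq]
  nlinarith [mul_nonneg (mul_nonneg hs0 (by linarith : (0:ℝ) ≤ 1 - 6 * ε))
      (by linarith : (0:ℝ) ≤ n - s - q),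
    mul_nonneg (by linarith : (0:ℝ) ≤ 2 * n / 3 - s)
      (by nlinarith : (0:ℝ) ≤ 2 * (1 - 2 * ε) * n - (1 - 6 * ε) * s)]
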